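/- Let φ : X → 𝒫(X)∖{∅} be a continuous multifunction. Then the induced Hutchinson operator F(B) = cl(⋃_{b∈B} φ(b)) on nonempty subsets of X, with the Hausdorff distance, is continuous at every nonempty compact set C: for every ε > 0 there is δ > 0 such that h(B,C) < δ implies h(F(B),F(C)) ≤ ε for all nonempty B ⊆ X. -/

import Mathlib

theorem hutchinson_continuous_at_compacta {X : Type*} [MetricSpace X]
    (φ : X → Set X) (hne : ∀ x, (φ x).Nonempty)
    (hcont : ∀ x₀, ∀ ε > (0 : ℝ), ∃ δ > (0 : ℝ), ∀ x, dist x x₀ < δ →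
      EMetric.hausdorffEdist (φ x) (φ x₀) < ENNReal.ofReal ε)
    (F : Set X → Set X) (hF : ∀ B : Set X, F B = closure (⋃ b ∈ B, φ b))
    (C : Set X) (hC : C.Nonempty) (hCc : IsCompact C) :
    ∀ ε > (0 : ℝ), ∃ δ > (0 : ℝ), ∀ B : Set X, B.Nonempty →
      EMetric.hausdorffEdist B C < ENNReal.ofReal δ →
      EMetric.hausdorffEdist (F B) (F C) ≤ ENNReal.ofReal ε := by
  intro ε hε
  choose d hd hd' using fun c => hcont c (ε / 2) (by positivity)
  obtain ⟨t, htC, hcover⟩ := hCc.elim_nhds_subcover (fun c => Metric.ball c (d c / 2))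
    (fun c _ => Metric.ball_mem_nhds c (by have := hd c; positivity))
  have htne : t.Nonempty := by
    obtain ⟨c, hc⟩ := hC
    obtain ⟨c', hc', _⟩ := Set.mem_iUnion₂.1 (hcover hc)
    exact ⟨c', hc'⟩
  set δ₀ : ℝ := t.inf' htne (fun c => d c / 2) with hδ₀
  have hδ₀pos : 0 < δ₀ := by
    rw [hδ₀, Finset.lt_inf'_iff]
    intro c _
    have := hd c; positivity
  refine ⟨δ₀, hδ₀pos, fun B hB hBC => ?_⟩
  rw [hF B, hF C]
  show Metric.hausdorffEDist _ _ ≤ _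
  rw [EMetric.hausdorffEdist_closure]
  have key : ∀ b c : X, c ∈ C → edist b c < ENNReal.ofReal δ₀ →
      EMetric.hausdorffEdist (φ b) (φ c) ≤ ENNReal.ofReal ε := by
    intro b c hc hbc
    obtain ⟨ci, hci, hcball⟩ := Set.mem_iUnion₂.1 (hcover hc)
    have hdist_cci : dist c ci < d ci / 2 := Metric.mem_ball.1 hcball
    have hδle : δ₀ ≤ d ci / 2 := Finset.inf'_le _ hci
    have hbc' : dist b c < δ₀ := edist_lt_ofReal.1 hbc
    have hdist_bci : dist b ci < d ci := by
      calc dist b ci ≤ dist b c + dist c ci := dist_triangle _ _ _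
        _ < δ₀ + d ci / 2 := by linarith
        _ ≤ d ci / 2 + d ci / 2 := by linarith
        _ = d ci := by ring
    have h1 : EMetric.hausdorffEdist (φ b) (φ ci) < ENNReal.ofReal (ε / 2) :=
      hd' ci b hdist_bci
    have h2 : EMetric.hausdorffEdist (φ ci) (φ c) < ENNReal.ofReal (ε / 2) := by
      show Metric.hausdorffEDist _ _ < _
      rw [EMetric.hausdorffEdist_comm]
      exact hd' ci c (lt_of_lt_of_le hdist_cci (by linarith))
    calc EMetric.hausdorffEdist (φ b) (φ c)
        ≤ EMetric.hausdorffEdist (φ b) (φ ci) + EMetric.hausdorffEdist (φ ci) (φ c) :=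
          EMetric.hausdorffEdist_triangle
      _ ≤ ENNReal.ofReal (ε / 2) + ENNReal.ofReal (ε / 2) := add_le_add h1.le h2.le
      _ = ENNReal.ofReal ε := by
          rw [← ENNReal.ofReal_add (by positivity) (by positivity)]; ring_nf
  apply EMetric.hausdorffEdist_le_of_infEdist
  · rintro x hx
    obtain ⟨b, hbB, hxb⟩ := Set.mem_iUnion₂.1 hx
    have : EMetric.infEdist b C < ENNReal.ofReal δ₀ :=
      lt_of_le_of_lt (EMetric.infEdist_le_hausdorffEdist_of_mem hbB) hBC
    obtain ⟨c, hcC, hbc⟩ := EMetric.infEdist_lt_iff.1 this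
    calc EMetric.infEdist x (⋃ c' ∈ C, φ c')
        ≤ EMetric.infEdist x (φ c) :=
          EMetric.infEdist_anti (Set.subset_iUnion₂ (s := fun c' _ => φ c') c hcC)
      _ ≤ EMetric.hausdorffEdist (φ b) (φ c) :=
          EMetric.infEdist_le_hausdorffEdist_of_mem hxb
      _ ≤ ENNReal.ofReal ε := key b c hcC hbc
  · rintro y hy
    obtain ⟨c, hcC, hyc⟩ := Set.mem_iUnion₂.1 hy
    have : EMetric.infEdist c B < ENNReal.ofReal δ₀ := by
      change Metric.hausdorffEDist _ _ < _ at hBC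
      rw [EMetric.hausdorffEdist_comm] at hBC
      exact lt_of_le_of_lt (EMetric.infEdist_le_hausdorffEdist_of_mem hcC) hBC
    obtain ⟨b, hbB, hcb⟩ := EMetric.infEdist_lt_iff.1 this
    calc EMetric.infEdist y (⋃ b' ∈ B, φ b')
        ≤ EMetric.infEdist y (φ b) :=
          EMetric.infEdist_anti (Set.subset_iUnion₂ (s := fun b' _ => φ b') b hbB)
      _ ≤ EMetric.hausdorffEdist (φ c) (φ b) :=
          EMetric.infEdist_le_hausdorffEdist_of_mem hyc
      _ ≤ ENNReal.ofReal ε := by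
          show Metric.hausdorffEDist _ _ ≤ _
          rw [EMetric.hausdorffEdist_comm]
          exact key b c hcC (by rwa [edist_comm] at hcb)
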